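/- (MO-Adagrad convergence rate) Let the MO-Adagrad weights be w_k = √(ς + Σ_{ℓ=0}^{k} ‖g_ℓ‖₂²) with ς ∈ (0,1), steps x^{k+1} = x^k - g_k/w_k, where g_k is the minimal-norm convex combination of gradients at x^k, and suppose Φ = max_j f_j is bounded below by Φ_low with Γ₀ = Φ(x^0) - Φ_low, and each ∇f_j is L_j-Lipschitz with L = max_j L_j. Then for all k ≥ 0, (1/(k+1)) Σ_{ℓ=0}^{k} ‖g_ℓ‖₂² ≤ θ/(k+1), i.e., Σ_{ℓ=0}^{k} ‖g_ℓ‖₂² ≤ θ, where θ = max{ ς, (ς/2)·e^{2Γ₀/L}, 2048·L⁴/ς }. -/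

import Mathlib

set_option maxHeartbeats 1000000

lemma descent_lemma {n : ℕ} (f : EuclideanSpace ℝ (Fin n) → ℝ)
    (Gf : EuclideanSpace ℝ (Fin n) → EuclideanSpace ℝ (Fin n))
    (hgrad : ∀ y, HasGradientAt f (Gf y) y) (L : ℝ)
    (hLip : ∀ y z, ‖Gf y - Gf z‖ ≤ L * ‖y - z‖)
    (x v : EuclideanSpace ℝ (Fin n)) :
    f (x + v) ≤ f x + (inner ℝ (Gf x) v : ℝ) + L / 2 * ‖v‖ ^ 2 := by
  have hc : ∀ t : ℝ, HasDerivAt (fun t : ℝ => x + t • v) v t := fun t => by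
    simpa using ((hasDerivAt_id t).smul_const v).const_add x
  have hφ : ∀ t : ℝ, HasDerivAt (fun t : ℝ => f (x + t • v))
      ((inner ℝ (Gf (x + t • v)) v : ℝ)) t := by
    intro t
    have h1 := (hgrad (x + t • v)).hasFDerivAt
    have h2 := h1.comp_hasDerivAt t (hc t)
    simpa [Function.comp_def] using h2
  set ψ : ℝ → ℝ := fun t => f x + t * (inner ℝ (Gf x) v : ℝ) + L / 2 * t ^ 2 * ‖v‖ ^ 2
      - f (x + t • v) with hψdef
  have hψ : ∀ t : ℝ, HasDerivAt ψ
      ((inner ℝ (Gf x) v : ℝ) + L * t * ‖v‖ ^ 2 - (inner ℝ (Gf (x + t • v)) v : ℝ)) t := by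
    intro t
    have h1 : HasDerivAt (fun t : ℝ => f x + t * (inner ℝ (Gf x) v : ℝ) + L / 2 * t ^ 2 * ‖v‖ ^ 2)
        ((inner ℝ (Gf x) v : ℝ) + L * t * ‖v‖ ^ 2) t := by
      have := (((hasDerivAt_id t).mul_const ((inner ℝ (Gf x) v : ℝ))).const_add (f x)).add
        ((((hasDerivAt_id t).pow 2).const_mul (L / 2)).mul_const (‖v‖ ^ 2))
      refine this.congr_deriv ?_
      simp only [id_eq, pow_one]
      push_cast
      ring
    exact h1.sub (hφ t)
  have hmono : MonotoneOn ψ (Set.Icc (0:ℝ) 1) := by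
    apply monotoneOn_of_hasDerivWithinAt_nonneg (convex_Icc 0 1)
      (fun t _ => (hψ t).continuousAt.continuousWithinAt)
      (fun t _ => (hψ t).hasDerivWithinAt)
    intro t ht
    rw [interior_Icc] at ht
    have hd : (inner ℝ (Gf (x + t • v)) v : ℝ) - (inner ℝ (Gf x) v : ℝ) ≤ L * t * ‖v‖ ^ 2 := by
      have h1 : (inner ℝ (Gf (x + t • v)) v : ℝ) - (inner ℝ (Gf x) v : ℝ)
          = (inner ℝ (Gf (x + t • v) - Gf x) v : ℝ) := by
        rw [inner_sub_left]
      rw [h1]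
      calc (inner ℝ (Gf (x + t • v) - Gf x) v : ℝ) ≤ ‖Gf (x + t • v) - Gf x‖ * ‖v‖ :=
            real_inner_le_norm _ _
        _ ≤ (L * ‖(x + t • v) - x‖) * ‖v‖ := by
            apply mul_le_mul_of_nonneg_right (hLip _ _) (norm_nonneg _)
        _ = L * t * ‖v‖ ^ 2 := by
            rw [add_sub_cancel_left, norm_smul, Real.norm_eq_abs, abs_of_pos ht.1]
            ring
    linarith
  have h01 := hmono (Set.mem_Icc.mpr ⟨le_refl 0, zero_le_one⟩)
    (Set.mem_Icc.mpr ⟨zero_le_one, le_refl 1⟩) zero_le_one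
  simp only [hψdef, zero_smul, add_zero, one_smul] at h01
  nlinarith [h01]


lemma minnorm_lemma {n m : ℕ} (v : Fin m → EuclideanSpace ℝ (Fin n)) (lam : Fin m → ℝ)
    (hpos : ∀ j, 0 ≤ lam j) (hsum : ∑ j, lam j = 1)
    (hmin : ∀ mu : Fin m → ℝ, (∀ j, 0 ≤ mu j) → ∑ j, mu j = 1 →
      ‖∑ j, lam j • v j‖ ^ 2 ≤ ‖∑ j, mu j • v j‖ ^ 2) (j0 : Fin m) :
    ‖∑ j, lam j • v j‖ ^ 2 ≤ (inner ℝ (v j0) (∑ j, lam j • v j) : ℝ) := by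
  set g := ∑ j, lam j • v j with hg
  set d := v j0 - g with hd
  have key : ∀ t : ℝ, 0 < t → t ≤ 1 → 0 ≤ 2 * (inner ℝ g d : ℝ) + t * ‖d‖ ^ 2 := by
    intro t ht0 ht1
    set mu : Fin m → ℝ := fun j => (1 - t) * lam j + t * (if j = j0 then 1 else 0) with hmu
    have hmupos : ∀ j, 0 ≤ mu j := by
      intro j
      have := hpos j
      show 0 ≤ (1 - t) * lam j + t * (if j = j0 then 1 else 0)
      split <;> nlinarith
    have hmusum : ∑ j, mu j = 1 := by
      simp only [hmu, Finset.sum_add_distrib, ← Finset.mul_sum, hsum,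
        Finset.sum_ite_eq' Finset.univ j0 (fun _ => (1:ℝ))]
      simp
    have hcomb : ∑ j, mu j • v j = g + t • d := by
      simp only [hmu, add_smul, Finset.sum_add_distrib, mul_smul]
      rw [← Finset.smul_sum, ← Finset.smul_sum, ← hg]
      have : ∑ j, (if j = j0 then (1:ℝ) else 0) • v j = v j0 := by
        simp only [ite_smul, one_smul, zero_smul, Finset.sum_ite_eq', Finset.mem_univ, if_true]
      rw [this, hd]
      rw [smul_sub, sub_smul, one_smul]
      abel
    have h1 := hmin mu hmupos hmusum
    rw [hcomb] at h1
    have h2 : ‖g + t • d‖ ^ 2 = ‖g‖ ^ 2 + 2 * (t * (inner ℝ g d : ℝ)) + t ^ 2 * ‖d‖ ^ 2 := by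
      rw [norm_add_sq_real, real_inner_smul_right, norm_smul, mul_pow, Real.norm_eq_abs,
        sq_abs]
    rw [h2] at h1
    nlinarith
  have hnn : 0 ≤ (inner ℝ g d : ℝ) := by
    by_contra hneg
    push_neg at hneg
    set I := (inner ℝ g d : ℝ) with hI
    set t := min 1 (-I / (‖d‖ ^ 2 + 1)) with htdef
    have hd1 : (0:ℝ) < ‖d‖ ^ 2 + 1 := by positivity
    have ht0 : 0 < t := by
      apply lt_min one_pos
      exact div_pos (by linarith) hd1
    have ht1 : t ≤ 1 := min_le_left _ _
    have h := key t ht0 ht1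
    have htI : t * (‖d‖ ^ 2 + 1) ≤ -I := by
      have : t ≤ -I / (‖d‖ ^ 2 + 1) := min_le_right _ _
      calc t * (‖d‖ ^ 2 + 1) ≤ (-I / (‖d‖ ^ 2 + 1)) * (‖d‖ ^ 2 + 1) := by
            apply mul_le_mul_of_nonneg_right this hd1.le
        _ = -I := by field_simp
    nlinarith
  have hexp : (inner ℝ g d : ℝ) = (inner ℝ (v j0) g : ℝ) - ‖g‖ ^ 2 := by
    rw [hd, inner_sub_right, real_inner_self_eq_norm_sq, real_inner_comm]
  rw [hexp] at hnn
  linarith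


lemma logsub_lemma {a b : ℝ} (ha : 0 < a) (hab : a ≤ b) :
    (b - a) / b ≤ Real.log b - Real.log a := by
  have hb : 0 < b := lt_of_lt_of_le ha hab
  have h1 : Real.log (a / b) ≤ a / b - 1 := Real.log_le_sub_one_of_pos (div_pos ha hb)
  rw [Real.log_div ha.ne' hb.ne'] at h1
  have : (b - a) / b = 1 - a / b := by field_simp
  linarith [this.le, this.ge]

lemma aux_log_bound {a b c V : ℝ} (ha : 0 < a) (hc : 0 < c) (hV : 1 ≤ V)
    (h : a * V ≤ b + c * Real.log V) :
    V ≤ max (Real.exp (b / c)) (16 * c ^ 2 / a ^ 2) := by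
  have hV0 : (0:ℝ) < V := lt_of_lt_of_le one_pos hV
  rcases le_or_gt (c * Real.log V) b with hcase | hcase
  · have h1 : Real.log V ≤ b / c := (le_div_iff₀ hc).mpr (by linarith [mul_comm c (Real.log V)])
    have h2 : V ≤ Real.exp (b / c) := by
      calc V = Real.exp (Real.log V) := (Real.exp_log hV0).symm
        _ ≤ Real.exp (b / c) := Real.exp_le_exp.mpr h1
    exact le_trans h2 (le_max_left _ _)
  · have h2 : a * V ≤ 2 * (c * Real.log V) := by linarith
    have hsV : 1 ≤ Real.sqrt V := by
      rw [show (1:ℝ) = Real.sqrt 1 by simp]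
      exact Real.sqrt_le_sqrt hV
    have hVs : Real.sqrt V * Real.sqrt V = V := Real.mul_self_sqrt hV0.le
    have hlog : Real.log V ≤ 2 * (Real.sqrt V - 1) := by
      have e1 : Real.log (Real.sqrt V) = Real.log V / 2 := Real.log_sqrt hV0.le
      have e2 : Real.log (Real.sqrt V) ≤ Real.sqrt V - 1 :=
        Real.log_le_sub_one_of_pos (by linarith)
      linarith
    have h3 : a * (Real.sqrt V * Real.sqrt V) ≤ 4 * c * Real.sqrt V := by
      rw [hVs]; nlinarith
    have h4 : a * Real.sqrt V ≤ 4 * c := by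
      have hs0 : 0 < Real.sqrt V := by linarith
      have := (mul_le_mul_iff_of_pos_right hs0).mpr (le_refl (a * Real.sqrt V))
      nlinarith
    have h5 : V ≤ 16 * c ^ 2 / a ^ 2 := by
      rw [le_div_iff₀ (by positivity)]
      nlinarith
    exact le_trans h5 (le_max_right _ _)

/-- MO-Adagrad convergence rate: for all `k`,
`Σ_{ℓ=0}^{k} ‖g_ℓ‖² ≤ θ` with `θ = max{ς, (ς/2)e^{2Γ₀/L}, 2048 L⁴/ς}`. -/
theorem stmt15 {n m : ℕ} (hm : 0 < m) (f : Fin m → EuclideanSpace ℝ (Fin n) → ℝ)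
    (Gf : Fin m → EuclideanSpace ℝ (Fin n) → EuclideanSpace ℝ (Fin n))
    (hgrad : ∀ j y, HasGradientAt (f j) (Gf j y) y)
    (L : Fin m → ℝ)
    (hLip : ∀ j, ∀ y z : EuclideanSpace ℝ (Fin n), ‖Gf j y - Gf j z‖ ≤ L j * ‖y - z‖)
    (Φlow : ℝ)
    (hlow : ∀ y : EuclideanSpace ℝ (Fin n),
      Φlow ≤ Finset.univ.sup' ⟨⟨0, hm⟩, Finset.mem_univ _⟩ (fun j => f j y))
    (ς : ℝ) (hς0 : 0 < ς) (hς1 : ς < 1)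
    (x : ℕ → EuclideanSpace ℝ (Fin n)) (g : ℕ → EuclideanSpace ℝ (Fin n)) (w : ℕ → ℝ)
    (lam : ℕ → Fin m → ℝ) (hpos : ∀ ℓ j, 0 ≤ lam ℓ j) (hsum : ∀ ℓ, ∑ j, lam ℓ j = 1)
    (hminim : ∀ ℓ, ∀ mu : Fin m → ℝ, (∀ j, 0 ≤ mu j) → ∑ j, mu j = 1 →
      ‖∑ j, lam ℓ j • Gf j (x ℓ)‖ ^ 2 ≤ ‖∑ j, mu j • Gf j (x ℓ)‖ ^ 2)
    (hgdef : ∀ ℓ, g ℓ = ∑ j, lam ℓ j • Gf j (x ℓ))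
    (hwdef : ∀ k, w k = Real.sqrt (ς + ∑ ℓ ∈ Finset.range (k + 1), ‖g ℓ‖ ^ 2))
    (hstep : ∀ k, x (k + 1) = x k - (w k)⁻¹ • g k) :
    ∀ k : ℕ,
      ∑ ℓ ∈ Finset.range (k + 1), ‖g ℓ‖ ^ 2 ≤
        max (max ς ((ς / 2) * Real.exp (2 *
            (Finset.univ.sup' ⟨⟨0, hm⟩, Finset.mem_univ _⟩ (fun j => f j (x 0)) - Φlow) /
            Finset.univ.sup' ⟨⟨0, hm⟩, Finset.mem_univ _⟩ L)))
          (2048 * (Finset.univ.sup' ⟨⟨0, hm⟩, Finset.mem_univ _⟩ L) ^ 4 / ς) := by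
  intro k
  -- handle the trivial case n = 0
  rcases Nat.eq_zero_or_pos n with hn | hn
  · subst hn
    have hg0 : ∀ ℓ, g ℓ = 0 := fun ℓ => Subsingleton.elim _ _
    have : ∑ ℓ ∈ Finset.range (k + 1), ‖g ℓ‖ ^ 2 = 0 := by
      apply Finset.sum_eq_zero
      intro ℓ _
      rw [hg0 ℓ, norm_zero]
      norm_num
    rw [this]
    exact le_trans hς0.le (le_trans (le_max_left _ _) (le_max_left _ _))
  -- abbreviations
  set Φ : EuclideanSpace ℝ (Fin n) → ℝ :=
    fun y => Finset.univ.sup' ⟨⟨0, hm⟩, Finset.mem_univ _⟩ (fun j => f j y) with hΦdef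
  set Lb : ℝ := Finset.univ.sup' ⟨⟨0, hm⟩, Finset.mem_univ _⟩ L with hLbdef
  set Γ : ℝ := Φ (x 0) - Φlow with hΓdef
  set S : ℕ → ℝ := fun K => ∑ ℓ ∈ Finset.range (K + 1), ‖g ℓ‖ ^ 2 with hSdef
  show S k ≤ max (max ς ((ς / 2) * Real.exp (2 * Γ / Lb))) (2048 * Lb ^ 4 / ς)
  have hS_nonneg : ∀ K, 0 ≤ S K := fun K =>
    Finset.sum_nonneg fun ℓ _ => sq_nonneg _
  have hS_mono : ∀ {A B : ℕ}, A ≤ B → S A ≤ S B := by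
    intro A B hAB
    apply Finset.sum_le_sum_of_subset_of_nonneg
    · exact Finset.range_subset_range.mpr (by omega)
    · intro ℓ _ _; exact sq_nonneg _
  have hwS : ∀ K, w K = Real.sqrt (ς + S K) := hwdef
  have hw_pos : ∀ K, 0 < w K := by
    intro K
    rw [hwS K]
    apply Real.sqrt_pos.mpr
    have := hS_nonneg K
    linarith
  have hw_sq : ∀ K, (w K) ^ 2 = ς + S K := by
    intro K
    rw [hwS K]
    exact Real.sq_sqrt (by have := hS_nonneg K; linarith)
  have hw_mono : ∀ {A B : ℕ}, A ≤ B → w A ≤ w B := by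
    intro A B hAB
    rw [hwS A, hwS B]
    exact Real.sqrt_le_sqrt (by linarith [hS_mono hAB])
  have hΓnn : 0 ≤ Γ := by
    have := hlow (x 0)
    rw [hΓdef]
    simp only [hΦdef]
    linarith
  -- nonnegativity of Lipschitz constants
  have hL_nonneg : ∀ j, 0 ≤ L j := by
    intro j
    have h1 := hLip j (EuclideanSpace.single ⟨0, hn⟩ (1:ℝ)) 0
    rw [sub_zero, EuclideanSpace.norm_single] at h1
    simp only [norm_one, mul_one] at h1
    exact le_trans (norm_nonneg _) h1
  have hLb_nonneg : 0 ≤ Lb := by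
    rw [hLbdef]
    exact le_trans (hL_nonneg ⟨0, hm⟩) (Finset.le_sup' L (Finset.mem_univ _))
  have hLjLb : ∀ j, L j ≤ Lb := by
    intro j
    rw [hLbdef]
    exact Finset.le_sup' L (Finset.mem_univ _)
  -- minimal norm property
  have hinner : ∀ ℓ j, ‖g ℓ‖ ^ 2 ≤ (inner ℝ (Gf j (x ℓ)) (g ℓ) : ℝ) := by
    intro ℓ j
    rw [hgdef ℓ]
    exact minnorm_lemma _ _ (hpos ℓ) (hsum ℓ) (hminim ℓ) j
  -- per-step descent for each j
  have hstep1 : ∀ ℓ j, f j (x (ℓ + 1)) ≤ f j (x ℓ) +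
      (-(‖g ℓ‖ ^ 2 / w ℓ) + Lb / 2 * (‖g ℓ‖ ^ 2 / (w ℓ) ^ 2)) := by
    intro ℓ j
    have hb := descent_lemma (f j) (Gf j) (hgrad j) (L j) (hLip j) (x ℓ) (-((w ℓ)⁻¹ • g ℓ))
    have hx : x ℓ + -((w ℓ)⁻¹ • g ℓ) = x (ℓ + 1) := by
      rw [hstep ℓ, sub_eq_add_neg]
    rw [hx] at hb
    have hin : (inner ℝ (Gf j (x ℓ)) (-((w ℓ)⁻¹ • g ℓ)) : ℝ)
        = -((w ℓ)⁻¹ * (inner ℝ (Gf j (x ℓ)) (g ℓ) : ℝ)) := by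
      rw [inner_neg_right, real_inner_smul_right]
    have hno : ‖-((w ℓ)⁻¹ • g ℓ)‖ ^ 2 = ((w ℓ)⁻¹) ^ 2 * ‖g ℓ‖ ^ 2 := by
      rw [norm_neg, norm_smul, Real.norm_eq_abs, abs_of_pos (inv_pos.mpr (hw_pos ℓ)), mul_pow]
    rw [hin, hno] at hb
    have e1 : -((w ℓ)⁻¹ * (inner ℝ (Gf j (x ℓ)) (g ℓ) : ℝ)) ≤ -((w ℓ)⁻¹ * ‖g ℓ‖ ^ 2) := by
      have := mul_le_mul_of_nonneg_left (hinner ℓ j) (inv_pos.mpr (hw_pos ℓ)).le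
      linarith
    have e2 : L j / 2 * (((w ℓ)⁻¹) ^ 2 * ‖g ℓ‖ ^ 2) ≤ Lb / 2 * (((w ℓ)⁻¹) ^ 2 * ‖g ℓ‖ ^ 2) := by
      apply mul_le_mul_of_nonneg_right (by linarith [hLjLb j]) (by positivity)
    have d1 : ‖g ℓ‖ ^ 2 / w ℓ = (w ℓ)⁻¹ * ‖g ℓ‖ ^ 2 := by
      rw [div_eq_mul_inv]; ring
    have d2 : ‖g ℓ‖ ^ 2 / (w ℓ) ^ 2 = ((w ℓ)⁻¹) ^ 2 * ‖g ℓ‖ ^ 2 := by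
      rw [div_eq_mul_inv, inv_pow]; ring
    rw [d1, d2]
    linarith
  -- per-step descent for Φ
  have hstep2 : ∀ ℓ, Φ (x (ℓ + 1)) ≤ Φ (x ℓ) +
      (-(‖g ℓ‖ ^ 2 / w ℓ) + Lb / 2 * (‖g ℓ‖ ^ 2 / (w ℓ) ^ 2)) := by
    intro ℓ
    apply Finset.sup'_le
    intro j _
    calc f j (x (ℓ + 1)) ≤ f j (x ℓ) +
        (-(‖g ℓ‖ ^ 2 / w ℓ) + Lb / 2 * (‖g ℓ‖ ^ 2 / (w ℓ) ^ 2)) := hstep1 ℓ j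
      _ ≤ Φ (x ℓ) + (-(‖g ℓ‖ ^ 2 / w ℓ) + Lb / 2 * (‖g ℓ‖ ^ 2 / (w ℓ) ^ 2)) := by
          have : f j (x ℓ) ≤ Φ (x ℓ) := Finset.le_sup' (fun j => f j (x ℓ)) (Finset.mem_univ j)
          linarith
  -- telescoping
  have hTel : ∀ K, Φ (x (K + 1)) ≤ Φ (x 0) +
      ∑ ℓ ∈ Finset.range (K + 1), (-(‖g ℓ‖ ^ 2 / w ℓ) + Lb / 2 * (‖g ℓ‖ ^ 2 / (w ℓ) ^ 2)) := by
    intro K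
    induction K with
    | zero => simpa using hstep2 0
    | succ K ih =>
      rw [Finset.sum_range_succ]
      have := hstep2 (K + 1)
      linarith
  have hKI0 : ∀ K, ∑ ℓ ∈ Finset.range (K + 1), ‖g ℓ‖ ^ 2 / w ℓ ≤
      Γ + Lb / 2 * ∑ ℓ ∈ Finset.range (K + 1), ‖g ℓ‖ ^ 2 / (w ℓ) ^ 2 := by
    intro K
    have h1 := hTel K
    have h2 : Φlow ≤ Φ (x (K + 1)) := hlow (x (K + 1))
    rw [Finset.sum_add_distrib, Finset.sum_neg_distrib, ← Finset.mul_sum] at h1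
    rw [hΓdef]
    linarith
  -- lower bound on the sum
  have hlow_sum : ∀ K, S K / w K ≤ ∑ ℓ ∈ Finset.range (K + 1), ‖g ℓ‖ ^ 2 / w ℓ := by
    intro K
    rw [hSdef]
    rw [Finset.sum_div]
    apply Finset.sum_le_sum
    intro ℓ hℓ
    have hℓK : ℓ ≤ K := by
      have := Finset.mem_range.mp hℓ; omega
    gcongr
    · exact hw_pos ℓ
    · exact hw_mono hℓK
  -- log bound on the sum
  have hlog_sum : ∀ K, ∑ ℓ ∈ Finset.range (K + 1), ‖g ℓ‖ ^ 2 / (w ℓ) ^ 2 ≤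
      Real.log (ς + S K) - Real.log ς := by
    intro K
    induction K with
    | zero =>
      rw [Finset.sum_range_one, hw_sq 0]
      have hS0 : S 0 = ‖g 0‖ ^ 2 := by rw [hSdef]; simp
      have := logsub_lemma hς0 (by linarith [hS_nonneg 0] : ς ≤ ς + S 0)
      rw [hS0] at this ⊢
      calc ‖g 0‖ ^ 2 / (ς + ‖g 0‖ ^ 2) = (ς + ‖g 0‖ ^ 2 - ς) / (ς + ‖g 0‖ ^ 2) := by ring_nf
        _ ≤ _ := this
    | succ K ih =>
      rw [Finset.sum_range_succ]
      have hSS : S (K + 1) = S K + ‖g (K + 1)‖ ^ 2 := by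
        rw [hSdef]; exact Finset.sum_range_succ _ _
      have h1 := logsub_lemma (a := ς + S K) (b := ς + S (K + 1))
        (by linarith [hS_nonneg K]) (by linarith [hS_mono (Nat.le_succ K), sq_nonneg ‖g (K+1)‖])
      rw [hw_sq (K + 1)]
      have e : (ς + S (K + 1) - (ς + S K)) = ‖g (K + 1)‖ ^ 2 := by rw [hSS]; ring
      rw [e] at h1
      linarith
  -- key inequality
  have hKI : ∀ K, S K / w K ≤ Γ + Lb / 2 * (Real.log (ς + S K) - Real.log ς) := by
    intro K
    have h1 := hKI0 K
    have h2 := hlog_sum K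
    have h3 := hlow_sum K
    have h4 := mul_le_mul_of_nonneg_left h2 (by linarith : (0:ℝ) ≤ Lb / 2)
    linarith
  -- trivial case : S k ≤ ς
  by_cases hsmall : S k ≤ ς
  · exact le_trans hsmall (le_trans (le_max_left _ _) (le_max_left _ _))
  push_neg at hsmall
  -- case Lb = 0
  rcases eq_or_lt_of_le hLb_nonneg with hLb0 | hLbpos
  · exfalso
    have hLj0 : ∀ j, L j = 0 := fun j => le_antisymm (hLb0 ▸ hLjLb j) (hL_nonneg j)
    have hGfc : ∀ j y z, Gf j y = Gf j z := by
      intro j y z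
      have := hLip j y z
      rw [hLj0 j, zero_mul] at this
      have := le_antisymm this (norm_nonneg _)
      rwa [norm_eq_zero, sub_eq_zero] at this
    have hcomb : ∀ (μ : Fin m → ℝ) ℓ ℓ', ∑ j, μ j • Gf j (x ℓ) = ∑ j, μ j • Gf j (x ℓ') := by
      intro μ ℓ ℓ'
      exact Finset.sum_congr rfl fun j _ => by rw [hGfc j (x ℓ) (x ℓ')]
    have hc_const : ∀ ℓ, ‖g ℓ‖ ^ 2 = ‖g 0‖ ^ 2 := by
      intro ℓ
      apply le_antisymm
      · have h1 := hminim ℓ (lam 0) (hpos 0) (hsum 0)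
        rw [hcomb (lam 0) ℓ 0, ← hgdef 0, ← hgdef ℓ] at h1
        exact h1
      · have h1 := hminim 0 (lam ℓ) (hpos ℓ) (hsum ℓ)
        rw [hcomb (lam ℓ) 0 ℓ, ← hgdef ℓ, ← hgdef 0] at h1
        exact h1
    have hbound : ∀ K, S K ≤ ς + 2 * Γ ^ 2 := by
      intro K
      have h1 := hKI K
      rw [← hLb0] at h1
      simp only [zero_div, zero_mul] at h1
      have h1' : S K ≤ Γ * w K := by
        rw [div_le_iff₀ (hw_pos K)] at h1
        linarith
      by_cases hKς : S K ≤ ς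
      · nlinarith [sq_nonneg Γ]
      · push_neg at hKς
        have h2 : S K * S K ≤ (Γ * w K) * (Γ * w K) :=
          mul_self_le_mul_self (hS_nonneg K) h1'
        have h3 : (Γ * w K) * (Γ * w K) = Γ ^ 2 * (ς + S K) := by
          have := hw_sq K; nlinarith [hw_sq K]
        nlinarith [sq_nonneg Γ]
    rcases eq_or_lt_of_le (sq_nonneg ‖g 0‖) with hc0 | hc0
    · have : S k = 0 := by
        apply Finset.sum_eq_zero
        intro ℓ _
        rw [hc_const ℓ, ← hc0]
      linarith
    · obtain ⟨K, hK⟩ := exists_nat_gt ((ς + 2 * Γ ^ 2) / ‖g 0‖ ^ 2)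
      have hSK : S K = (K + 1 : ℝ) * ‖g 0‖ ^ 2 := by
        show (∑ ℓ ∈ Finset.range (K + 1), ‖g ℓ‖ ^ 2) = _
        rw [Finset.sum_congr rfl fun ℓ _ => hc_const ℓ]
        rw [Finset.sum_const, Finset.card_range, nsmul_eq_mul]
        push_cast
        ring
      have h1 := hbound K
      rw [hSK] at h1
      rw [div_lt_iff₀ hc0] at hK
      nlinarith [sq_nonneg ‖g 0‖]
  -- main case Lb > 0
  set V : ℝ := Real.sqrt (2 * S k / ς) with hVdef
  have hV2 : V ^ 2 = 2 * S k / ς := Real.sq_sqrt (by positivity)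
  have hV1 : 1 ≤ V := by
    rw [hVdef, show (1:ℝ) = Real.sqrt 1 by simp]
    apply Real.sqrt_le_sqrt
    rw [le_div_iff₀ hς0]
    linarith [hS_nonneg k]
  have hV0 : 0 ≤ V := by linarith
  have hwk_le : w k ≤ Real.sqrt (2 * S k) := by
    rw [hwS k]
    exact Real.sqrt_le_sqrt (by linarith)
  have h2S : Real.sqrt (2 * S k) * Real.sqrt (2 * S k) = 2 * S k :=
    Real.mul_self_sqrt (by linarith)
  have hVς : Real.sqrt ς * V = Real.sqrt (2 * S k) := by
    rw [hVdef, ← Real.sqrt_mul hς0.le]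
    congr 1
    field_simp
  have key1 : Real.sqrt ς / 2 * V ≤ S k / w k := by
    have e : Real.sqrt ς / 2 * V = Real.sqrt (2 * S k) / 2 := by
      rw [div_mul_eq_mul_div, hVς]
    rw [e, div_le_div_iff₀ two_pos (hw_pos k)]
    calc Real.sqrt (2 * S k) * w k ≤ Real.sqrt (2 * S k) * Real.sqrt (2 * S k) :=
          mul_le_mul_of_nonneg_left hwk_le (Real.sqrt_nonneg _)
      _ = 2 * S k := h2S
      _ = S k * 2 := by ring
  have key2 : Real.log (ς + S k) - Real.log ς ≤ 2 * Real.log V := by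
    have h1 : Real.log (ς + S k) ≤ Real.log (2 * S k) :=
      Real.log_le_log (by linarith) (by linarith)
    have e1 : Real.log (2 * S k) - Real.log ς = Real.log (2 * S k / ς) :=
      (Real.log_div (by linarith : (2:ℝ) * S k ≠ 0) hς0.ne').symm
    have e2 : Real.log (2 * S k / ς) = 2 * Real.log V := by
      rw [← hV2, Real.log_pow]
      push_cast
      ring
    linarith
  have main : Real.sqrt ς / 2 * V ≤ Γ + Lb * Real.log V := by
    have h1 := hKI k
    have h2 := mul_le_mul_of_nonneg_left key2 (by linarith : (0:ℝ) ≤ Lb / 2)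
    linarith
  have happ := aux_log_bound (a := Real.sqrt ς / 2) (b := Γ) (c := Lb)
    (by positivity) hLbpos hV1 main
  have hA : (Real.sqrt ς / 2) ^ 2 = ς / 4 := by
    rw [div_pow, Real.sq_sqrt hς0.le]
    norm_num
  have happ' : V ≤ max (Real.exp (Γ / Lb)) (64 * Lb ^ 2 / ς) := by
    have e : 16 * Lb ^ 2 / (Real.sqrt ς / 2) ^ 2 = 64 * Lb ^ 2 / ς := by
      rw [hA]
      field_simp
      ring
    rwa [e] at happ
  have hSk : S k = ς * V ^ 2 / 2 := by
    rw [hV2]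
    field_simp
  rcases max_cases (Real.exp (Γ / Lb)) (64 * Lb ^ 2 / ς) with ⟨hmax, _⟩ | ⟨hmax, _⟩
  · rw [hmax] at happ'
    have hsq : V ^ 2 ≤ Real.exp (Γ / Lb) ^ 2 := pow_le_pow_left₀ hV0 happ' 2
    have e : Real.exp (Γ / Lb) ^ 2 = Real.exp (2 * Γ / Lb) := by
      rw [sq, ← Real.exp_add]
      congr 1
      ring
    rw [e] at hsq
    have : S k ≤ ς / 2 * Real.exp (2 * Γ / Lb) := by
      rw [hSk]
      nlinarith
    exact le_trans this (le_trans (le_max_right _ _) (le_max_left _ _))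
  · rw [hmax] at happ'
    have hsq : V ^ 2 ≤ (64 * Lb ^ 2 / ς) ^ 2 := pow_le_pow_left₀ hV0 happ' 2
    have : S k ≤ 2048 * Lb ^ 4 / ς := by
      rw [hSk]
      have e : ς / 2 * (64 * Lb ^ 2 / ς) ^ 2 = 2048 * Lb ^ 4 / ς := by
        field_simp
        ring
      nlinarith
    exact le_trans this (le_max_right _ _)
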